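/- For h ≥ 2, the set A_h consisting of all integers of the form ±((2h)^{4N} + (2h)^{N+j}) with N = 2^n, n ≥ 0, and 0 ≤ j ≤ N-1, satisfies property P(h). -/

import Mathlib

/-- `s` is a representation of `D` as a sum of `h` elements of `A` (as a multiset). -/
def IsRep (A : Set ℤ) (h : ℕ) (D : ℤ) (s : Multiset ℤ) : Prop :=
  Multiset.card s = h ∧ (∀ x ∈ s, x ∈ A) ∧ s.sum = D

/-- A core multiset for property `P(h)`: at most `h` elements of `A`, with the same
parity of cardinality as `h`, and with `aᵢ ≠ -aⱼ` for `i ≠ j`. -/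
def IsCore (A : Set ℤ) (h : ℕ) (c : Multiset ℤ) : Prop :=
  Multiset.card c ≤ h ∧ Multiset.card c % 2 = h % 2 ∧ (∀ x ∈ c, x ∈ A) ∧
    ∀ x ∈ c, -x ∉ c.erase x

/-- `s` is, up to permutation, the core `c` together with cancelling pairs `(u, -u)`
with `u ∈ A ∩ (-A)`. -/
def MatchesCore (A : Set ℤ) (c s : Multiset ℤ) : Prop :=
  ∃ p : Multiset ℤ, (∀ u ∈ p, u ∈ A ∧ -u ∈ A) ∧ s = c + p + p.map (fun u => -u)

/-- Property `P(h)`: every `D` in the `h`-fold sumset of `A` has a unique core, such that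
every representation of `D` as a sum of `h` elements of `A` is a permutation of the core
together with cancelling pairs `(u, -u)`, `u ∈ A ∩ (-A)`. -/
def PropertyP (A : Set ℤ) (h : ℕ) : Prop :=
  ∀ D : ℤ, (∃ s, IsRep A h D s) →
    ∃! c : Multiset ℤ, IsCore A h c ∧ ∀ s, IsRep A h D s → MatchesCore A c s

/-- `S` is a `B_h`-set: any two `h`-tuples of elements of `S` with equal sums are
permutations of each other. -/
def IsBhSet (S : Set ℤ) (h : ℕ) : Prop :=
  ∀ s t : Multiset ℤ, Multiset.card s = h → Multiset.card t = h →
    (∀ x ∈ s, x ∈ S) → (∀ x ∈ t, x ∈ S) → s.sum = t.sum → s = t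

namespace St17

def bval (q : ℤ) (n j : ℕ) : ℤ := q ^ (4 * 2 ^ n) + q ^ (2 ^ n + j)

lemma pair_eq {n j n' j' : ℕ} (hj : j < 2 ^ n) (hj' : j' < 2 ^ n')
    (hl : 2 ^ n + j = 2 ^ n' + j') : n = n' ∧ j = j' := by
  rcases lt_trichotomy n n' with hlt | he | hlt
  · exfalso
    have : 2 ^ n + j < 2 ^ n' := by
      calc 2 ^ n + j < 2 ^ n + 2 ^ n := by omega
        _ = 2 ^ (n+1) := by ring
        _ ≤ 2 ^ n' := Nat.pow_le_pow_right (by norm_num) hlt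
    omega
  · exact ⟨he, by subst he; omega⟩
  · exfalso
    have : 2 ^ n' + j' < 2 ^ n := by
      calc 2 ^ n' + j' < 2 ^ n' + 2 ^ n' := by omega
        _ = 2 ^ (n'+1) := by ring
        _ ≤ 2 ^ n := Nat.pow_le_pow_right (by norm_num) hlt
    omega

lemma bval_pos {q : ℤ} (hq : 2 ≤ q) (n j : ℕ) : 0 < bval q n j := by
  have h1 : (0:ℤ) < q ^ (4 * 2 ^ n) := pow_pos (by omega) _
  have h2 : (0:ℤ) < q ^ (2 ^ n + j) := pow_pos (by omega) _
  unfold bval; omega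

lemma bval_lt {q : ℤ} (hq : 2 ≤ q) {n j n' j' : ℕ} (hj : j < 2 ^ n) (hn : n < n') :
    bval q n j < bval q n' j' := by
  have hle : 2 ^ n + j ≤ 4 * 2 ^ n := by
    have := Nat.one_le_two_pow (n := n); omega
  have h1 : q ^ (2 ^ n + j) ≤ q ^ (4 * 2 ^ n) :=
    pow_le_pow_right₀ (by omega) hle
  have h2 : 4 * 2 ^ n + 1 ≤ 4 * 2 ^ n' := by
    have := Nat.pow_lt_pow_right (a := 2) (by norm_num) hn
    omega
  have h3 : 2 * q ^ (4 * 2 ^ n) ≤ q ^ (4 * 2 ^ n + 1) := by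
    rw [pow_succ]
    have := pow_pos (show (0:ℤ) < q by omega) (4 * 2 ^ n)
    nlinarith
  have h4 : q ^ (4 * 2 ^ n + 1) ≤ q ^ (4 * 2 ^ n') := pow_le_pow_right₀ (by omega) h2
  have h5 : (0:ℤ) < q ^ (2 ^ n' + j') := pow_pos (by omega) _
  unfold bval
  nlinarith [pow_pos (show (0:ℤ) < q by omega) (4 * 2 ^ n')]

lemma bval_inj {q : ℤ} (hq : 2 ≤ q) {n j n' j' : ℕ} (hj : j < 2 ^ n) (hj' : j' < 2 ^ n')
    (he : bval q n j = bval q n' j') : n = n' ∧ j = j' := by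
  rcases lt_trichotomy n n' with hlt | hne | hlt
  · exact absurd he (ne_of_lt (bval_lt hq hj hlt))
  · subst hne
    refine ⟨rfl, ?_⟩
    have hqe : q ^ (2 ^ n + j) = q ^ (2 ^ n + j') := by
      unfold bval at he; omega
    by_contra hne
    rcases Nat.lt_or_ge j j' with hlt | hge
    · have := pow_lt_pow_right₀ (by omega : 1 < q) (by omega : 2 ^ n + j < 2 ^ n + j')
      omega
    · have := pow_lt_pow_right₀ (by omega : 1 < q) (by omega : 2 ^ n + j' < 2 ^ n + j)
      omega
  · exact absurd he.symm (ne_of_lt (bval_lt hq hj' hlt))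

lemma key_dvd {q : ℤ} (hq : 2 ≤ q) {n₀ j₀ : ℕ} (hj₀ : j₀ < 2 ^ n₀)
    (m : Multiset ℤ)
    (hm : ∀ y ∈ m, ∃ n j, j < 2 ^ n ∧ 2 ^ n₀ + j₀ ≤ 2 ^ n + j ∧
      (y = bval q n j ∨ y = -bval q n j)) :
    (q ^ (2 ^ n₀ + j₀ + 1)) ∣
      m.sum - ((m.count (bval q n₀ j₀) : ℤ) - (m.count (-bval q n₀ j₀) : ℤ))
        * q ^ (2 ^ n₀ + j₀) := by
  induction m using Multiset.induction with
  | empty => simp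
  | cons y m ih =>
    obtain ⟨n, j, hj, hge, hy⟩ := hm y (Multiset.mem_cons_self y m)
    have ih' := ih (fun z hz => hm z (Multiset.mem_cons_of_mem hz))
    have hb₀pos := bval_pos hq n₀ j₀
    have hbpos := bval_pos hq n j
    have h2n₀ := Nat.one_le_two_pow (n := n₀)
    have h2n := Nat.one_le_two_pow (n := n)
    rcases eq_or_lt_of_le hge with heq | hlt
    · obtain ⟨hn, hjj⟩ := pair_eq hj₀ hj heq
      subst hn; subst hjj
      have hdvd4 : (q : ℤ) ^ (2 ^ n₀ + j₀ + 1) ∣ q ^ (4 * 2 ^ n₀) :=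
        pow_dvd_pow q (by omega)
      rcases hy with hy | hy
      · have hc1 : (y ::ₘ m).count (bval q n₀ j₀) = m.count (bval q n₀ j₀) + 1 := by
          rw [hy, Multiset.count_cons_self]
        have hc2 : (y ::ₘ m).count (-bval q n₀ j₀) = m.count (-bval q n₀ j₀) := by
          rw [Multiset.count_cons_of_ne (by omega)]
        rw [Multiset.sum_cons, hc1, hc2]
        have h1 : (q:ℤ) ^ (2 ^ n₀ + j₀ + 1) ∣ y - q ^ (2 ^ n₀ + j₀) := by
          rw [hy]
          have : bval q n₀ j₀ - q ^ (2 ^ n₀ + j₀) = q ^ (4 * 2 ^ n₀) := by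
            unfold bval; ring
          rw [this]; exact hdvd4
        have := dvd_add ih' h1
        convert this using 1
        · rfl
        push_cast
        ring
      · have hc1 : (y ::ₘ m).count (bval q n₀ j₀) = m.count (bval q n₀ j₀) := by
          rw [Multiset.count_cons_of_ne (by omega)]
        have hc2 : (y ::ₘ m).count (-bval q n₀ j₀) = m.count (-bval q n₀ j₀) + 1 := by
          rw [hy, Multiset.count_cons_self]
        rw [Multiset.sum_cons, hc1, hc2]
        have h1 : (q:ℤ) ^ (2 ^ n₀ + j₀ + 1) ∣ y + q ^ (2 ^ n₀ + j₀) := by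
          rw [hy]
          have : -bval q n₀ j₀ + q ^ (2 ^ n₀ + j₀) = -q ^ (4 * 2 ^ n₀) := by
            unfold bval; ring
          rw [this]; exact hdvd4.neg_right
        have := dvd_add ih' h1
        convert this using 1
        · rfl
        push_cast
        ring
    · -- 2^n₀ + j₀ < 2^n + j : y contributes nothing
      have hdvdy : (q:ℤ) ^ (2 ^ n₀ + j₀ + 1) ∣ y := by
        have d1 : (q:ℤ) ^ (2 ^ n₀ + j₀ + 1) ∣ q ^ (4 * 2 ^ n) := pow_dvd_pow q (by omega)
        have d2 : (q:ℤ) ^ (2 ^ n₀ + j₀ + 1) ∣ q ^ (2 ^ n + j) := pow_dvd_pow q (by omega)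
        have d3 : (q:ℤ) ^ (2 ^ n₀ + j₀ + 1) ∣ bval q n j := dvd_add d1 d2
        rcases hy with hy | hy
        · rw [hy]; exact d3
        · rw [hy]; exact d3.neg_right
      have hvne : bval q n j ≠ bval q n₀ j₀ := by
        intro he
        obtain ⟨h1, h2⟩ := bval_inj hq hj hj₀ he
        subst h1; subst h2; omega
      have hne1 : y ≠ bval q n₀ j₀ := by
        rcases hy with hy | hy
        · rw [hy]; exact hvne
        · rw [hy]; intro he; linarith
      have hne2 : y ≠ -bval q n₀ j₀ := by
        rcases hy with hy | hy
        · rw [hy]; intro he; linarith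
        · rw [hy]; intro he; exact hvne (by linarith)
      have hc1 : (y ::ₘ m).count (bval q n₀ j₀) = m.count (bval q n₀ j₀) := by
        rw [Multiset.count_cons_of_ne (Ne.symm hne1)]
      have hc2 : (y ::ₘ m).count (-bval q n₀ j₀) = m.count (-bval q n₀ j₀) := by
        rw [Multiset.count_cons_of_ne (Ne.symm hne2)]
      rw [Multiset.sum_cons, hc1, hc2]
      have := dvd_add ih' hdvdy
      convert this using 1
      · rfl
      ring


def inA (q : ℤ) (y : ℤ) : Prop :=
  ∃ n j : ℕ, j < 2 ^ n ∧ (y = bval q n j ∨ y = -bval q n j)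

lemma sum_map_neg (s : Multiset ℤ) : (s.map (fun y => -y)).sum = -s.sum := by
  induction s using Multiset.induction with
  | empty => simp
  | cons a s ih => simp [ih]; ring

lemma core_eq (h : ℕ) (hh : 2 ≤ h) :
    ∀ (k : ℕ) (c c' : Multiset ℤ), Multiset.card c + Multiset.card c' ≤ k →
      Multiset.card c ≤ h → Multiset.card c' ≤ h →
      (∀ y ∈ c, inA (2 * (h:ℤ)) y) → (∀ y ∈ c', inA (2 * (h:ℤ)) y) →
      (∀ x ∈ c, -x ∉ c.erase x) → (∀ x ∈ c', -x ∉ c'.erase x) →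
      c.sum = c'.sum → c = c' := by
  intro k
  induction k with
  | zero =>
    intro c c' hk _ _ _ _ _ _ _
    have h1 : c = 0 := by rw [← Multiset.card_eq_zero]; omega
    have h2 : c' = 0 := by rw [← Multiset.card_eq_zero]; omega
    rw [h1, h2]
  | succ k ih =>
    intro c c' hk hch hc'h hcA hc'A hnp hnp' hsum
    set q : ℤ := 2 * (h:ℤ) with hqdef
    have hq : 2 ≤ q := by simp only [hqdef]; omega
    set m : Multiset ℤ := c + c'.map (fun y => -y) with hmdef
    by_cases hm0 : m = 0
    · have hcard : Multiset.card m = 0 := by rw [hm0]; simp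
      rw [hmdef, Multiset.card_add, Multiset.card_map] at hcard
      have h1 : c = 0 := by rw [← Multiset.card_eq_zero]; omega
      have h2 : c' = 0 := by rw [← Multiset.card_eq_zero]; omega
      rw [h1, h2]
    · have hmA : ∀ y ∈ m, inA q y := by
        intro y hy
        rcases Multiset.mem_add.1 hy with hy | hy
        · exact hcA y hy
        · obtain ⟨z, hz, hzy⟩ := Multiset.mem_map.1 hy
          obtain ⟨n, j, hj, hv⟩ := hc'A z hz
          subst hzy
          refine ⟨n, j, hj, ?_⟩
          rcases hv with hv | hv
          · exact Or.inr (by simp [hv])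
          · exact Or.inl (by simp [hv])
      set S : Set ℕ := {l | ∃ y ∈ m, ∃ n j : ℕ, j < 2 ^ n ∧
        (y = bval q n j ∨ y = -bval q n j) ∧ 2 ^ n + j = l} with hSdef
      have hSne : S.Nonempty := by
        obtain ⟨y, hy⟩ := Multiset.exists_mem_of_ne_zero hm0
        obtain ⟨n, j, hj, hv⟩ := hmA y hy
        exact ⟨2 ^ n + j, y, hy, n, j, hj, hv, rfl⟩
      obtain ⟨y₀, hy₀m, n₀, j₀, hj₀, hy₀v, hl₀⟩ := Nat.sInf_mem hSne
      have hm' : ∀ y ∈ m, ∃ n j, j < 2 ^ n ∧ 2 ^ n₀ + j₀ ≤ 2 ^ n + j ∧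
          (y = bval q n j ∨ y = -bval q n j) := by
        intro y hy
        obtain ⟨n, j, hj, hv⟩ := hmA y hy
        have : 2 ^ n + j ∈ S := ⟨y, hy, n, j, hj, hv, rfl⟩
        exact ⟨n, j, hj, hl₀ ▸ Nat.sInf_le this, hv⟩
      have hdvd := key_dvd hq hj₀ m hm'
      set b₀ : ℤ := bval q n₀ j₀ with hb₀def
      have hb₀pos : 0 < b₀ := bval_pos hq n₀ j₀
      have hmsum : m.sum = 0 := by
        rw [hmdef, Multiset.sum_add, sum_map_neg, hsum]; ring
      set α : ℤ := (m.count b₀ : ℤ) - (m.count (-b₀) : ℤ) with hαdef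
      have hQα : q ∣ α := by
        rw [hmsum] at hdvd
        have h1 : q ^ (2 ^ n₀ + j₀) * q ∣ q ^ (2 ^ n₀ + j₀) * (-α) := by
          rw [← pow_succ]
          convert hdvd using 1
          ring
        have h2 : q ∣ -α :=
          (mul_dvd_mul_iff_left (pow_ne_zero _ (by omega : q ≠ 0))).mp h1
        exact (dvd_neg).mp h2
      -- counts
      have hcnt1 : m.count b₀ = c.count b₀ + c'.count (-b₀) := by
        rw [hmdef, Multiset.count_add]
        congr 1
        have := Multiset.count_map_eq_count' (fun y : ℤ => -y) c' neg_injective (-b₀)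
        simpa using this
      have hcnt2 : m.count (-b₀) = c.count (-b₀) + c'.count b₀ := by
        rw [hmdef, Multiset.count_add]
        congr 1
        exact Multiset.count_map_eq_count' _ _ neg_injective _
      have hA : c.count b₀ = 0 ∨ c.count (-b₀) = 0 := by
        by_contra hcon
        push_neg at hcon
        have h1 : b₀ ∈ c := Multiset.count_pos.mp (by omega)
        have h2 : -b₀ ∈ c.erase b₀ := by
          apply Multiset.count_pos.mp
          rw [Multiset.count_erase_of_ne (by omega : -b₀ ≠ b₀)]
          omega
        exact hnp b₀ h1 h2
      have hA' : c'.count b₀ = 0 ∨ c'.count (-b₀) = 0 := by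
        by_contra hcon
        push_neg at hcon
        have h1 : b₀ ∈ c' := Multiset.count_pos.mp (by omega)
        have h2 : -b₀ ∈ c'.erase b₀ := by
          apply Multiset.count_pos.mp
          rw [Multiset.count_erase_of_ne (by omega : -b₀ ≠ b₀)]
          omega
        exact hnp' b₀ h1 h2
      have hy₀pos : 1 ≤ m.count b₀ + m.count (-b₀) := by
        rcases hy₀v with hv | hv
        · have : 0 < m.count b₀ := Multiset.count_pos.mpr (by rw [← hv]; exact hy₀m)
          omega
        · have : 0 < m.count (-b₀) := Multiset.count_pos.mpr (by rw [← hv]; exact hy₀m)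
          omega
      have hcc1 : c.count b₀ ≤ Multiset.card c := Multiset.count_le_card _ _
      have hcc2 : c.count (-b₀) ≤ Multiset.card c := Multiset.count_le_card _ _
      have hcc3 : c'.count b₀ ≤ Multiset.card c' := Multiset.count_le_card _ _
      have hcc4 : c'.count (-b₀) ≤ Multiset.card c' := Multiset.count_le_card _ _
      by_cases hα0 : α = 0
      · -- matched element exists
        have hz : (0 < c.count b₀ ∧ 0 < c'.count b₀) ∨
            (0 < c.count (-b₀) ∧ 0 < c'.count (-b₀)) := by
          rw [hαdef, hcnt1, hcnt2] at hα0
          omega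
        obtain ⟨z, hz1, hz2⟩ : ∃ z : ℤ, z ∈ c ∧ z ∈ c' := by
          rcases hz with ⟨h1, h2⟩ | ⟨h1, h2⟩
          · exact ⟨b₀, Multiset.count_pos.mp h1, Multiset.count_pos.mp h2⟩
          · exact ⟨-b₀, Multiset.count_pos.mp h1, Multiset.count_pos.mp h2⟩
        have hcc : 0 < Multiset.card c := Multiset.card_pos_iff_exists_mem.mpr ⟨z, hz1⟩
        have hcc' : 0 < Multiset.card c' := Multiset.card_pos_iff_exists_mem.mpr ⟨z, hz2⟩
        have hec : Multiset.card (c.erase z) = Multiset.card c - 1 :=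
          Multiset.card_erase_of_mem hz1
        have hec' : Multiset.card (c'.erase z) = Multiset.card c' - 1 :=
          Multiset.card_erase_of_mem hz2
        have hce : c.erase z = c'.erase z := by
          apply ih
          · omega
          · omega
          · omega
          · exact fun y hy => hcA y (Multiset.mem_of_mem_erase hy)
          · exact fun y hy => hc'A y (Multiset.mem_of_mem_erase hy)
          · intro x hx hmem
            apply hnp x (Multiset.mem_of_mem_erase hx)
            have hle : (c.erase z).erase x ≤ c.erase x := by
              rw [Multiset.erase_comm]
              exact Multiset.erase_le _ _
            exact Multiset.mem_of_le hle hmem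
          · intro x hx hmem
            apply hnp' x (Multiset.mem_of_mem_erase hx)
            have hle : (c'.erase z).erase x ≤ c'.erase x := by
              rw [Multiset.erase_comm]
              exact Multiset.erase_le _ _
            exact Multiset.mem_of_le hle hmem
          · have e1 : z + (c.erase z).sum = c.sum := by
              rw [← Multiset.sum_cons, Multiset.cons_erase hz1]
            have e2 : z + (c'.erase z).sum = c'.sum := by
              rw [← Multiset.sum_cons, Multiset.cons_erase hz2]
            omega
        calc c = z ::ₘ c.erase z := (Multiset.cons_erase hz1).symm
          _ = z ::ₘ c'.erase z := by rw [hce]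
          _ = c' := Multiset.cons_erase hz2
      · -- α ≠ 0 : contradiction
        exfalso
        have hqle : q ≤ |α| := Int.le_of_dvd (abs_pos.mpr hα0) ((dvd_abs _ _).mpr hQα)
        have hcase : (c.count b₀ = h ∧ c.count (-b₀) = 0 ∧
              c'.count b₀ = 0 ∧ c'.count (-b₀) = h ∧
              Multiset.card c = h ∧ Multiset.card c' = h) ∨
            (c.count b₀ = 0 ∧ c.count (-b₀) = h ∧
              c'.count b₀ = h ∧ c'.count (-b₀) = 0 ∧
              Multiset.card c = h ∧ Multiset.card c' = h) := by
          rw [hαdef, hcnt1, hcnt2] at hqle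
          rw [hqdef] at hqle
          rcases le_abs.mp hqle with h' | h' <;> { push_cast at h'; omega }
        rcases hcase with ⟨e1, e2, e3, e4, e5, e6⟩ | ⟨e1, e2, e3, e4, e5, e6⟩
        · have hc : c = Multiset.replicate h b₀ :=
            Multiset.eq_replicate.mpr ⟨e5, fun x hx =>
              (Multiset.count_eq_card.mp (by omega) x hx).symm⟩
          have hc' : c' = Multiset.replicate h (-b₀) :=
            Multiset.eq_replicate.mpr ⟨e6, fun x hx =>
              (Multiset.count_eq_card.mp (by omega) x hx).symm⟩
          rw [hc, hc', Multiset.sum_replicate, Multiset.sum_replicate] at hsum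
          simp only [nsmul_eq_mul, mul_neg] at hsum
          have hpos : (0:ℤ) < (h:ℤ) * b₀ :=
            mul_pos (by exact_mod_cast (by omega : 0 < h)) hb₀pos
          linarith
        · have hc : c = Multiset.replicate h (-b₀) :=
            Multiset.eq_replicate.mpr ⟨e5, fun x hx =>
              (Multiset.count_eq_card.mp (by omega) x hx).symm⟩
          have hc' : c' = Multiset.replicate h b₀ :=
            Multiset.eq_replicate.mpr ⟨e6, fun x hx =>
              (Multiset.count_eq_card.mp (by omega) x hx).symm⟩
          rw [hc, hc', Multiset.sum_replicate, Multiset.sum_replicate] at hsum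
          simp only [nsmul_eq_mul, mul_neg] at hsum
          have hpos : (0:ℤ) < (h:ℤ) * b₀ :=
            mul_pos (by exact_mod_cast (by omega : 0 < h)) hb₀pos
          linarith


lemma extract (A : Set ℤ) (hA : ∀ x ∈ A, -x ∈ A) :
    ∀ (k : ℕ) (s : Multiset ℤ), Multiset.card s ≤ k → (∀ x ∈ s, x ∈ A) →
    ∃ c p : Multiset ℤ, (∀ u ∈ p, u ∈ A ∧ -u ∈ A) ∧
      s = c + p + p.map (fun u => -u) ∧
      (∀ x ∈ c, -x ∉ c.erase x) ∧
      Multiset.card s = Multiset.card c + 2 * Multiset.card p := by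
  intro k
  induction k with
  | zero =>
    intro s hs hsA
    have h0 : s = 0 := by rw [← Multiset.card_eq_zero]; omega
    subst h0
    exact ⟨0, 0, by simp, by simp, by simp, by simp⟩
  | succ k ih =>
    intro s hs hsA
    by_cases hex : ∃ x ∈ s, -x ∈ s.erase x
    · obtain ⟨x, hx, hnx⟩ := hex
      set s' := (s.erase x).erase (-x) with hs'def
      have hc1 : Multiset.card (s.erase x) = Multiset.card s - 1 :=
        Multiset.card_erase_of_mem hx
      have hc2 : Multiset.card s' = Multiset.card (s.erase x) - 1 :=
        Multiset.card_erase_of_mem hnx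
      have hcard : 0 < Multiset.card s := Multiset.card_pos_iff_exists_mem.mpr ⟨x, hx⟩
      have hcard2 : 0 < Multiset.card (s.erase x) :=
        Multiset.card_pos_iff_exists_mem.mpr ⟨-x, hnx⟩
      obtain ⟨c, p, hpA, hdecomp, hnp, hcnt⟩ := ih s' (by omega)
        (fun y hy => hsA y (Multiset.mem_of_mem_erase (Multiset.mem_of_mem_erase hy)))
      have hrec : s = x ::ₘ (-x) ::ₘ s' := by
        rw [hs'def, Multiset.cons_erase hnx, Multiset.cons_erase hx]
      refine ⟨c, x ::ₘ p, ?_, ?_, hnp, ?_⟩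
      · intro u hu
        rcases Multiset.mem_cons.1 hu with hu | hu
        · subst hu
          exact ⟨hsA u hx, hA u (hsA u hx)⟩
        · exact hpA u hu
      · rw [hrec, hdecomp, Multiset.map_cons]
        rw [Multiset.add_cons, Multiset.add_cons, Multiset.cons_add, Multiset.cons_swap]
      · rw [hrec]
        simp only [Multiset.card_cons]
        omega
    · push_neg at hex
      exact ⟨s, 0, by simp, by simp, hex, by simp⟩

end St17

open St17 in
/-- For h ≥ 2, the set of all ±((2h)^(4N) + (2h)^(N+j)) with N = 2^n, n ≥ 0,
0 ≤ j ≤ N - 1, satisfies property P(h). -/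
theorem statement17 (h : ℕ) (hh : 2 ≤ h) :
    PropertyP {x : ℤ | ∃ n j : ℕ, j < 2 ^ n ∧
      (x = (2 * (h : ℤ)) ^ (4 * 2 ^ n) + (2 * (h : ℤ)) ^ (2 ^ n + j) ∨
        x = -((2 * (h : ℤ)) ^ (4 * 2 ^ n) + (2 * (h : ℤ)) ^ (2 ^ n + j)))} h := by
  set A : Set ℤ := {x : ℤ | ∃ n j : ℕ, j < 2 ^ n ∧
      (x = (2 * (h : ℤ)) ^ (4 * 2 ^ n) + (2 * (h : ℤ)) ^ (2 ^ n + j) ∨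
        x = -((2 * (h : ℤ)) ^ (4 * 2 ^ n) + (2 * (h : ℤ)) ^ (2 ^ n + j)))} with hAdef
  have hmemA : ∀ x : ℤ, x ∈ A ↔ inA (2 * (h:ℤ)) x := by
    intro x
    constructor
    · rintro ⟨n, j, hj, hv⟩
      exact ⟨n, j, hj, by simpa [bval] using hv⟩
    · rintro ⟨n, j, hj, hv⟩
      exact ⟨n, j, hj, by simpa [bval] using hv⟩
  have hAsym : ∀ x ∈ A, -x ∈ A := by
    intro x hx
    obtain ⟨n, j, hj, hv⟩ := hx
    rcases hv with hv | hv
    · exact ⟨n, j, hj, Or.inr (by rw [hv])⟩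
    · exact ⟨n, j, hj, Or.inl (by rw [hv, neg_neg])⟩
  intro D hD
  obtain ⟨s₀, hs₀card, hs₀A, hs₀sum⟩ := hD
  obtain ⟨c, p, hpA, hdec, hnp, hcnt⟩ := extract A hAsym h s₀ (le_of_eq hs₀card) hs₀A
  have hcA : ∀ y ∈ c, y ∈ A := by
    intro y hy
    apply hs₀A
    rw [hdec]
    exact Multiset.mem_add.mpr (Or.inl (Multiset.mem_add.mpr (Or.inl hy)))
  have hcsum : c.sum = D := by
    rw [hdec] at hs₀sum
    rw [Multiset.sum_add, Multiset.sum_add, sum_map_neg] at hs₀sum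
    omega
  have hccard : Multiset.card c ≤ h := by omega
  -- the common-core property
  have hkey : ∀ s, IsRep A h D s → MatchesCore A c s := by
    rintro s ⟨hscard, hsA, hssum⟩
    obtain ⟨c', p', hpA', hdec', hnp', hcnt'⟩ := extract A hAsym h s (le_of_eq hscard) hsA
    have hc'A : ∀ y ∈ c', y ∈ A := by
      intro y hy
      apply hsA
      rw [hdec']
      exact Multiset.mem_add.mpr (Or.inl (Multiset.mem_add.mpr (Or.inl hy)))
    have hc'sum : c'.sum = D := by
      rw [hdec'] at hssum
      rw [Multiset.sum_add, Multiset.sum_add, sum_map_neg] at hssum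
      omega
    have hceq : c' = c := by
      apply core_eq h hh (Multiset.card c' + Multiset.card c) c' c le_rfl
        (by omega) hccard
        (fun y hy => (hmemA y).mp (hc'A y hy))
        (fun y hy => (hmemA y).mp (hcA y hy))
        hnp' hnp (by omega)
    exact ⟨p', hpA', by rw [← hceq]; exact hdec'⟩
  refine ⟨c, ⟨⟨hccard, by omega, hcA, hnp⟩, hkey⟩, ?_⟩
  rintro c' ⟨⟨hc'card, _, hc'A, hnp'⟩, hmatch'⟩
  obtain ⟨p', hpA', hdec'⟩ := hmatch' s₀ ⟨hs₀card, hs₀A, hs₀sum⟩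
  have hc'sum : c'.sum = D := by
    rw [hdec'] at hs₀sum
    rw [Multiset.sum_add, Multiset.sum_add, sum_map_neg] at hs₀sum
    omega
  apply core_eq h hh (Multiset.card c' + Multiset.card c) c' c le_rfl hc'card hccard
    (fun y hy => (hmemA y).mp (hc'A y hy))
    (fun y hy => (hmemA y).mp (hcA y hy))
    hnp' hnp (by omega)
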